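/- Let q be a positive integer. The number of quadruples (a,b,c,d) with entries in {0,1,...,q-1} satisfying ab = cd is at most C·q²·log(q+1) for some absolute constant C. -/

import Mathlib

open Finset Real

lemma harm (n : ℕ) : (∑ x ∈ Finset.Icc 1 n, (1 / (x:ℝ))) ≤ 1 + Real.log n := by
  have := harmonic_le_one_add_log n
  rw [harmonic_eq_sum_Icc] at this
  push_cast at this
  simpa [one_div] using this

lemma halfsum (n : ℕ) :
    (∑ x ∈ Finset.Icc 1 n, ∑ y ∈ Finset.Icc 1 n, (if y ≤ x then 1/(x:ℝ)^2 else 0))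
      ≤ 1 + Real.log n := by
  calc (∑ x ∈ Finset.Icc 1 n, ∑ y ∈ Finset.Icc 1 n, (if y ≤ x then 1/(x:ℝ)^2 else 0))
      = ∑ x ∈ Finset.Icc 1 n, (((Finset.Icc 1 n).filter (· ≤ x)).card : ℝ) * (1/(x:ℝ)^2) := by
        refine Finset.sum_congr rfl fun x hx => ?_
        rw [← Finset.sum_filter, Finset.sum_const, nsmul_eq_mul]
    _ ≤ ∑ x ∈ Finset.Icc 1 n, (1/(x:ℝ)) := by
        refine Finset.sum_le_sum fun x hx => ?_
        have hx1 : 1 ≤ x := (Finset.mem_Icc.mp hx).1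
        have hcount : ((Finset.Icc 1 n).filter (· ≤ x)).card ≤ x := by
          calc ((Finset.Icc 1 n).filter (· ≤ x)).card
              ≤ (Finset.Icc 1 x).card := by
                apply Finset.card_le_card
                intro y hy
                simp only [Finset.mem_filter, Finset.mem_Icc] at *
                exact ⟨hy.1.1, hy.2⟩
            _ = x := by simp
        have hxne : (x:ℝ) ≠ 0 := by positivity
        calc (((Finset.Icc 1 n).filter (· ≤ x)).card : ℝ) * (1/(x:ℝ)^2)
            ≤ (x:ℝ) * (1/(x:ℝ)^2) := by
              apply mul_le_mul_of_nonneg_right (by exact_mod_cast hcount)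
              positivity
          _ = 1/(x:ℝ) := by field_simp
    _ ≤ 1 + Real.log n := harm n

lemma maxsum (n : ℕ) :
    (∑ p ∈ Finset.Icc 1 n ×ˢ Finset.Icc 1 n, (1 / ((max p.1 p.2 : ℕ) : ℝ)^2))
      ≤ 2 * (1 + Real.log n) := by
  have key : ∀ p ∈ Finset.Icc 1 n ×ˢ Finset.Icc 1 n,
      (1 / ((max p.1 p.2 : ℕ) : ℝ)^2) ≤
      (if p.2 ≤ p.1 then 1/(p.1:ℝ)^2 else 0) + (if p.1 ≤ p.2 then 1/(p.2:ℝ)^2 else 0) := by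
    rintro ⟨x, y⟩ _
    rcases le_total y x with h | h
    · rw [max_eq_left h, if_pos h]
      have : (0:ℝ) ≤ if x ≤ y then 1/(y:ℝ)^2 else 0 := by positivity
      linarith
    · rw [max_eq_right h, if_pos h]
      have : (0:ℝ) ≤ if y ≤ x then 1/(x:ℝ)^2 else 0 := by positivity
      linarith
  refine (Finset.sum_le_sum key).trans ?_
  rw [Finset.sum_add_distrib]
  have h1 : (∑ p ∈ Finset.Icc 1 n ×ˢ Finset.Icc 1 n,
      (if p.2 ≤ p.1 then 1/(p.1:ℝ)^2 else 0)) ≤ 1 + Real.log n := by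
    rw [Finset.sum_product]
    exact halfsum n
  have h2 : (∑ p ∈ Finset.Icc 1 n ×ˢ Finset.Icc 1 n,
      (if p.1 ≤ p.2 then 1/(p.2:ℝ)^2 else 0)) ≤ 1 + Real.log n := by
    rw [Finset.sum_product, Finset.sum_comm]
    exact halfsum n
  linarith


/-- Reconstruction lemma: for positive a,b with ab=cd, the gcd parametrization. -/
lemma recon {a b c d : ℕ} (ha : 0 < a) (hb : 0 < b) (h : a * b = c * d) :
    Nat.gcd a c * (a / Nat.gcd a c) = a ∧
    Nat.gcd a c * (c / Nat.gcd a c) = c ∧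
    (b / (c / Nat.gcd a c)) * (c / Nat.gcd a c) = b ∧
    (b / (c / Nat.gcd a c)) * (a / Nat.gcd a c) = d ∧
    0 < Nat.gcd a c ∧ 0 < a / Nat.gcd a c ∧ 0 < c / Nat.gcd a c ∧
    0 < b / (c / Nat.gcd a c) := by
  have hc : 0 < c := by
    rcases Nat.eq_zero_or_pos c with hc0 | hc0
    · exfalso
      rw [hc0, zero_mul] at h
      have : a * b ≠ 0 := Nat.mul_ne_zero ha.ne' hb.ne'
      exact this h
    · exact hc0
  set g := Nat.gcd a c with hgdef
  have hg : 0 < g := Nat.gcd_pos_of_pos_left c ha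
  set x := a / g with hxdef
  set y := c / g with hydef
  have hgx : g * x = a := Nat.mul_div_cancel' (Nat.gcd_dvd_left a c)
  have hgy : g * y = c := Nat.mul_div_cancel' (Nat.gcd_dvd_right a c)
  have hx : 0 < x := by
    rcases Nat.eq_zero_or_pos x with h0 | h0
    · rw [h0, mul_zero] at hgx; omega
    · exact h0
  have hy : 0 < y := by
    rcases Nat.eq_zero_or_pos y with h0 | h0
    · rw [h0, mul_zero] at hgy; omega
    · exact h0
  have hcop : Nat.Coprime x y := Nat.coprime_div_gcd_div_gcd hg
  have hxb : x * b = y * d := by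
    have : g * (x * b) = g * (y * d) := by
      rw [← mul_assoc, ← mul_assoc, hgx, hgy, h]
    exact Nat.eq_of_mul_eq_mul_left hg this
  have hyb : y ∣ b := by
    have h1 : y ∣ x * b := ⟨d, hxb⟩
    exact (Nat.Coprime.dvd_of_dvd_mul_left (hcop.symm) h1)
  set t := b / y with htdef
  have hty : t * y = b := Nat.div_mul_cancel hyb
  have htx : t * x = d := by
    have : y * (t * x) = y * d := by
      rw [← hxb, ← hty]; ring
    exact Nat.eq_of_mul_eq_mul_left hy this
  have ht : 0 < t := by
    rcases Nat.eq_zero_or_pos t with h0 | h0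
    · rw [h0, zero_mul] at hty; omega
    · exact h0
  exact ⟨hgx, hgy, hty, htx, hg, hx, hy, ht⟩

lemma main_bound (q : ℕ) (hq : 0 < q) :
    ((((Finset.range q ×ˢ Finset.range q) ×ˢ (Finset.range q ×ˢ Finset.range q)).filter
          (fun x => x.1.1 * x.1.2 = x.2.1 * x.2.2)).card : ℝ)
        ≤ 4 * (q:ℝ)^2 + (q:ℝ)^2 * (2 * (1 + Real.log ((q:ℝ)+1))) := by
  classical
  set A := Finset.range q ×ˢ Finset.range q with hA
  set S := (A ×ˢ A).filter (fun x : (ℕ×ℕ)×(ℕ×ℕ) => x.1.1 * x.1.2 = x.2.1 * x.2.2) with hS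
  set P : (ℕ×ℕ)×(ℕ×ℕ) → Prop := fun x => x.1.1 = 0 ∨ x.1.2 = 0 with hP
  -- split
  have hsplit : (S.filter P).card + (S.filter (fun x => ¬ P x)).card = S.card :=
    Finset.card_filter_add_card_filter_not P
  -- zero part
  have hz : (S.filter P).card ≤ 4 * q^2 := by
    set Z := A.filter (fun p : ℕ×ℕ => p.1 = 0 ∨ p.2 = 0) with hZ
    have hZcard : Z.card ≤ 2 * q := by
      have hsub : Z ⊆ ({0} ×ˢ Finset.range q) ∪ (Finset.range q ×ˢ {0}) := by
        intro p hp
        simp only [hZ, Finset.mem_filter, hA, Finset.mem_product, Finset.mem_range,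
          Finset.mem_union, Finset.mem_singleton] at *
        rcases hp.2 with h | h
        · exact Or.inl ⟨h, hp.1.2⟩
        · exact Or.inr ⟨hp.1.1, h⟩
      calc Z.card ≤ (({0} ×ˢ Finset.range q) ∪ (Finset.range q ×ˢ {0})).card :=
            Finset.card_le_card hsub
        _ ≤ ({0} ×ˢ Finset.range q).card + (Finset.range q ×ˢ {0}).card :=
            Finset.card_union_le _ _
        _ ≤ 2 * q := by
            rw [Finset.card_product, Finset.card_product]
            simp; omega
    have hsub : S.filter P ⊆ Z ×ˢ Z := by
      intro x hx
      simp only [hS, hP, Finset.mem_filter, Finset.mem_product] at hx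
      obtain ⟨⟨⟨h1, h2⟩, hab⟩, hz⟩ := hx
      rw [Finset.mem_product]
      constructor
      · simp only [hZ, Finset.mem_filter]; exact ⟨h1, hz⟩
      · simp only [hZ, Finset.mem_filter]
        refine ⟨h2, ?_⟩
        have : x.2.1 * x.2.2 = 0 := by
          rw [← hab]
          rcases hz with h | h <;> simp [h]
        rcases Nat.mul_eq_zero.mp this with h | h
        · exact Or.inl h
        · exact Or.inr h
    calc (S.filter P).card ≤ (Z ×ˢ Z).card := Finset.card_le_card hsub
      _ = Z.card * Z.card := Finset.card_product _ _
      _ ≤ (2*q) * (2*q) := Nat.mul_le_mul hZcard hZcard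
      _ = 4 * q^2 := by ring
  -- nonzero part: inject into T
  set T := (A ×ˢ A).filter (fun p : (ℕ×ℕ)×(ℕ×ℕ) =>
      0 < p.1.1 ∧ 0 < p.1.2 ∧ 0 < p.2.1 ∧ 0 < p.2.2 ∧
      p.2.1 * p.1.1 < q ∧ p.2.1 * p.1.2 < q ∧ p.2.2 * p.1.1 < q ∧ p.2.2 * p.1.2 < q) with hT
  have hinj : (S.filter (fun x => ¬ P x)).card ≤ T.card := by
    set φ : (ℕ×ℕ)×(ℕ×ℕ) → (ℕ×ℕ)×(ℕ×ℕ) := fun x =>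
      ((x.1.1 / Nat.gcd x.1.1 x.2.1, x.2.1 / Nat.gcd x.1.1 x.2.1),
       (Nat.gcd x.1.1 x.2.1, x.1.2 / (x.2.1 / Nat.gcd x.1.1 x.2.1))) with hφ
    have hmem : ∀ x ∈ S.filter (fun x => ¬ P x),
        (0 < x.1.1 ∧ 0 < x.1.2 ∧ x.1.1 < q ∧ x.1.2 < q ∧ x.2.1 < q ∧ x.2.2 < q ∧
         x.1.1 * x.1.2 = x.2.1 * x.2.2) := by
      intro x hx
      simp only [hS, hP, Finset.mem_filter, hA, Finset.mem_product, Finset.mem_range] at hx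
      obtain ⟨⟨⟨⟨ha, hb⟩, hc, hd⟩, hab⟩, hnz⟩ := hx
      push_neg at hnz
      exact ⟨Nat.pos_of_ne_zero hnz.1, Nat.pos_of_ne_zero hnz.2, ha, hb, hc, hd, hab⟩
    apply Finset.card_le_card_of_injOn φ
    · intro x hx
      obtain ⟨ha, hb, haq, hbq, hcq, hdq, hab⟩ := hmem x hx
      obtain ⟨hgx, hgy, hty, htx, hg, hxp, hyp, htp⟩ := recon ha hb hab
      simp only [Finset.mem_coe, hT, hφ, Finset.mem_filter, hA, Finset.mem_product, Finset.mem_range]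
      refine ⟨⟨⟨?_, ?_⟩, ?_, ?_⟩, hxp, hyp, hg, htp, ?_, ?_, ?_, ?_⟩
      · calc x.1.1 / Nat.gcd x.1.1 x.2.1 ≤ x.1.1 := Nat.div_le_self _ _
          _ < q := haq
      · calc x.2.1 / Nat.gcd x.1.1 x.2.1 ≤ x.2.1 := Nat.div_le_self _ _
          _ < q := hcq
      · calc Nat.gcd x.1.1 x.2.1 ≤ x.1.1 := Nat.le_of_dvd ha (Nat.gcd_dvd_left _ _)
          _ < q := haq
      · calc x.1.2 / (x.2.1 / Nat.gcd x.1.1 x.2.1) ≤ x.1.2 := Nat.div_le_self _ _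
          _ < q := hbq
      · rw [hgx]; exact haq
      · rw [hgy]; exact hcq
      · rw [htx]; exact hdq
      · rw [hty]; exact hbq
    · intro x hx x' hx' heq
      obtain ⟨ha, hb, _, _, _, _, hab⟩ := hmem x hx
      obtain ⟨ha', hb', _, _, _, _, hab'⟩ := hmem x' hx'
      obtain ⟨hgx, hgy, hty, htx, _, _, _, _⟩ := recon ha hb hab
      obtain ⟨hgx', hgy', hty', htx', _, _, _, _⟩ := recon ha' hb' hab'
      simp only [hφ, Prod.mk.injEq] at heq
      obtain ⟨⟨e1, e2⟩, e3, e4⟩ := heq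
      have h1 : x.1.1 = x'.1.1 := by rw [← hgx, ← hgx', e1, e3]
      have h2 : x.2.1 = x'.2.1 := by rw [← hgy, ← hgy', e2, e3]
      have h3 : x.1.2 = x'.1.2 := by rw [← hty, ← hty', e4, e2]
      have h4 : x.2.2 = x'.2.2 := by rw [← htx, ← htx', e4, e1]
      exact Prod.ext (Prod.ext h1 h3) (Prod.ext h2 h4)
  -- fiberwise bound on T
  have hTbound : (T.card : ℝ) ≤ (q:ℝ)^2 * (2 * (1 + Real.log ((q:ℝ)+1))) := by
    classical
    set A' := Finset.Icc 1 (q-1) ×ˢ Finset.Icc 1 (q-1) with hA'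
    have hfib : T.card = ∑ xy ∈ A', (T.filter (fun p => p.1 = xy)).card := by
      apply Finset.card_eq_sum_card_fiberwise
      intro p hp
      simp only [Finset.mem_coe, hT, Finset.mem_filter, hA, Finset.mem_product, Finset.mem_range] at hp
      obtain ⟨⟨⟨h1, h2⟩, _⟩, hx, hy, _⟩ := hp
      simp only [Finset.mem_coe, hA', Finset.mem_product, Finset.mem_Icc]
      omega
    have hfibbound : ∀ xy ∈ A',
        (T.filter (fun p => p.1 = xy)).card ≤ ((q-1) / (max xy.1 xy.2)) * ((q-1) / (max xy.1 xy.2)) := by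
      rintro ⟨x, y⟩ hxy
      simp only [hA', Finset.mem_product, Finset.mem_Icc] at hxy
      have hx1 : 1 ≤ x := hxy.1.1
      have hy1 : 1 ≤ y := hxy.2.1
      set M := max x y with hM
      have hM1 : 1 ≤ M := le_trans hx1 (le_max_left _ _)
      set G := Finset.Icc 1 ((q-1)/M) with hG
      have key : ∀ p ∈ T.filter (fun p => p.1 = (x,y)), p.2 ∈ G ×ˢ G := by
        intro p hp
        simp only [Finset.mem_filter, hT] at hp
        obtain ⟨⟨_, _, _, hg, ht, b1, b2, b3, b4⟩, hfst⟩ := hp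
        simp only [hfst] at b1 b2 b3 b4
        simp only [hG, Finset.mem_product, Finset.mem_Icc]
        have hgM : p.2.1 * M ≤ q - 1 := by
          rcases max_choice x y with h | h <;> rw [hM, h] <;> omega
        have htM : p.2.2 * M ≤ q - 1 := by
          rcases max_choice x y with h | h <;> rw [hM, h] <;> omega
        have hMpos : 0 < M := hM1
        exact ⟨⟨hg, (Nat.le_div_iff_mul_le hMpos).mpr hgM⟩,
               ⟨ht, (Nat.le_div_iff_mul_le hMpos).mpr htM⟩⟩
      calc (T.filter (fun p => p.1 = (x,y))).card ≤ (G ×ˢ G).card := by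
            apply Finset.card_le_card_of_injOn Prod.snd key
            intro p hp p' hp' h2
            simp only [Finset.mem_coe, Finset.mem_filter] at hp hp'
            exact Prod.ext (hp.2.trans hp'.2.symm) h2
        _ = ((q-1)/M) * ((q-1)/M) := by
            rw [Finset.card_product, Nat.card_Icc]
            simp
    have step : ∀ xy ∈ A',
        (((T.filter (fun p => p.1 = xy)).card : ℝ))
          ≤ (q:ℝ)^2 * (1 / ((max xy.1 xy.2 : ℕ) : ℝ)^2) := by
      rintro ⟨x, y⟩ hxy
      have hb := hfibbound (x,y) hxy
      simp only [hA', Finset.mem_product, Finset.mem_Icc] at hxy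
      set M := max x y with hM
      have hM1 : 1 ≤ M := le_trans hxy.1.1 (le_max_left _ _)
      have hMpos : (0:ℝ) < (M:ℝ) := by exact_mod_cast hM1
      have hcd : (((q-1)/M : ℕ) : ℝ) ≤ (q:ℝ) / (M:ℝ) := by
        calc (((q-1)/M : ℕ) : ℝ) ≤ ((q-1 : ℕ):ℝ) / (M:ℝ) := Nat.cast_div_le
          _ ≤ (q:ℝ) / (M:ℝ) := by
              gcongr
              exact_mod_cast Nat.sub_le q 1
      have hnn : (0:ℝ) ≤ (((q-1)/M : ℕ) : ℝ) := Nat.cast_nonneg _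
      calc (((T.filter (fun p => p.1 = (x,y))).card : ℝ))
          ≤ (((q-1)/M : ℕ) : ℝ) * (((q-1)/M : ℕ) : ℝ) := by exact_mod_cast hb
        _ ≤ ((q:ℝ)/(M:ℝ)) * ((q:ℝ)/(M:ℝ)) := by
            apply mul_le_mul hcd hcd hnn
            positivity
        _ = (q:ℝ)^2 * (1 / ((M:ℕ) : ℝ)^2) := by
            field_simp
    have hlog : Real.log ((q-1 : ℕ):ℝ) ≤ Real.log ((q:ℝ)+1) := by
      rcases Nat.eq_zero_or_pos (q-1) with h0 | h0
      · rw [h0]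
        simp only [Nat.cast_zero, Real.log_zero]
        apply Real.log_nonneg
        have : (1:ℝ) ≤ (q:ℝ) := by exact_mod_cast hq
        linarith
      · apply Real.log_le_log (by exact_mod_cast h0)
        have : ((q-1:ℕ):ℝ) ≤ ((q+1:ℕ):ℝ) := by exact_mod_cast (by omega : q-1 ≤ q+1)
        push_cast at this
        linarith
    calc (T.card : ℝ) = ∑ xy ∈ A', (((T.filter (fun p => p.1 = xy)).card : ℝ)) := by
          exact_mod_cast hfib
      _ ≤ ∑ xy ∈ A', (q:ℝ)^2 * (1 / ((max xy.1 xy.2 : ℕ) : ℝ)^2) := Finset.sum_le_sum step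
      _ = (q:ℝ)^2 * ∑ xy ∈ A', (1 / ((max xy.1 xy.2 : ℕ) : ℝ)^2) := by
          rw [Finset.mul_sum]
      _ ≤ (q:ℝ)^2 * (2 * (1 + Real.log ((q-1:ℕ):ℝ))) := by
          apply mul_le_mul_of_nonneg_left (maxsum (q-1)) (by positivity)
      _ ≤ (q:ℝ)^2 * (2 * (1 + Real.log ((q:ℝ)+1))) := by
          apply mul_le_mul_of_nonneg_left _ (by positivity)
          linarith
  have hcast : (S.card : ℝ) = ((S.filter P).card : ℝ) + ((S.filter (fun x => ¬ P x)).card : ℝ) := by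
    exact_mod_cast (congrArg (Nat.cast (R := ℝ)) hsplit).symm
  have h1 : ((S.filter P).card : ℝ) ≤ 4 * (q:ℝ)^2 := by exact_mod_cast hz
  have h2 : ((S.filter (fun x => ¬ P x)).card : ℝ) ≤ (T.card : ℝ) := by exact_mod_cast hinj
  calc (S.card : ℝ) = _ := hcast
    _ ≤ 4 * (q:ℝ)^2 + (q:ℝ)^2 * (2 * (1 + Real.log ((q:ℝ)+1))) := by
        have := hTbound; linarith


/-- There is an absolute constant `C` such that for all positive integers `q`,
the number of quadruples `(a,b,c,d)` with entries in `{0,…,q-1}` satisfying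
`a*b = c*d` is at most `C * q^2 * log (q+1)`. -/
theorem stmt1 :
    ∃ C : ℝ, 0 < C ∧ ∀ q : ℕ, 0 < q →
      ((((Finset.range q ×ˢ Finset.range q) ×ˢ (Finset.range q ×ˢ Finset.range q)).filter
          (fun x => x.1.1 * x.1.2 = x.2.1 * x.2.2)).card : ℝ)
        ≤ C * (q : ℝ) ^ 2 * Real.log (q + 1) := by
  refine ⟨100, by norm_num, fun q hq => ?_⟩
  have h := main_bound q hq
  set L := Real.log ((q:ℝ)+1) with hLdef
  have hq1 : (1:ℝ) ≤ (q:ℝ) := by exact_mod_cast hq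
  have hL2 : Real.log 2 ≤ L := by
    apply Real.log_le_log (by norm_num)
    linarith
  have hL : (0.69:ℝ) ≤ L := by
    have := Real.log_two_gt_d9
    linarith
  calc ((((Finset.range q ×ˢ Finset.range q) ×ˢ (Finset.range q ×ˢ Finset.range q)).filter
          (fun x => x.1.1 * x.1.2 = x.2.1 * x.2.2)).card : ℝ)
      ≤ 4 * (q:ℝ)^2 + (q:ℝ)^2 * (2 * (1 + L)) := h
    _ = (q:ℝ)^2 * (6 + 2*L) := by ring
    _ ≤ (q:ℝ)^2 * (100*L) := by
        apply mul_le_mul_of_nonneg_left (by linarith) (by positivity)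
    _ = 100 * (q:ℝ)^2 * L := by ring
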